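/- (Compatibility equation.) Let n be a nodal configuration with l i n ≠ 0 for every member i. The member-length map ℓ : (Fin n_n → EuclideanSpace ℝ (Fin 3)) → EuclideanSpace ℝ (Fin n_e), (ℓ n) i = l i n, is differentiable at n, and its Fréchet derivative is the linear map δn ↦ (fun i => (1 / (l i n)) * ⟪h i n, Σ_q (C i q) • δn q⟫); that is, the Jacobian of ℓ at n is the compatibility matrix B_l whose (i, (p, α)) entry is (C i p) * (h i n) α / (l i n). -/

import Mathlib

open scoped RealInnerProductSpace
open Matrix

noncomputable section

/-- The Euclidean space of nodal vectors of a structure with `n_n` nodes. -/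
abbrev NodalSpace (n_n : ℕ) := PiLp 2 (fun _ : Fin n_n => EuclideanSpace ℝ (Fin 3))

/-- **Compatibility equation.** The member-length map `ℓ : n ↦ (i ↦ l i n)` is differentiable
at any configuration with all member lengths nonzero, and its Fréchet derivative is
`δn ↦ (i ↦ (1 / l i n) ⟪h i n, Σ_q (C i q) • δn q⟫)`, i.e. the Jacobian of `ℓ` is the
compatibility matrix `B_l`. -/
lemma norm_clm_hasFDerivAt {G F : Type*} [NormedAddCommGroup G] [NormedSpace ℝ G]
    [NormedAddCommGroup F] [InnerProductSpace ℝ F] (L : G →L[ℝ] F) (x : G)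
    (h0 : L x ≠ 0) :
    HasFDerivAt (fun y => ‖L y‖) ((1 / ‖L x‖) • (innerSL ℝ (L x)).comp L) x := by
  have hg : HasFDerivAt (fun y => ‖L y‖ ^ 2) (2 • (innerSL ℝ (L x)).comp L) x :=
    L.hasFDerivAt.norm_sq
  have hsq : (‖L x‖ : ℝ) ^ 2 ≠ 0 := pow_ne_zero _ (norm_ne_zero_iff.mpr h0)
  have hsqrt : HasDerivAt Real.sqrt (1 / (2 * Real.sqrt (‖L x‖ ^ 2))) (‖L x‖ ^ 2) :=
    Real.hasDerivAt_sqrt hsq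
  have := hsqrt.comp_hasFDerivAt x hg
  have heq : (fun y => Real.sqrt (‖L y‖ ^ 2)) = fun y => ‖L y‖ := by
    funext y; rw [Real.sqrt_sq (norm_nonneg _)]
  rw [Function.comp_def, heq] at this
  convert this using 1
  · rfl
  · rfl
  rw [Real.sqrt_sq (norm_nonneg _)]
  ext y
  simp [smul_smul]
  ring

theorem compatibility_equation {n_n n_e : ℕ}
    (j k : Fin n_e → Fin n_n) (hjk : ∀ i, j i ≠ k i)
    (C : Matrix (Fin n_e) (Fin n_n) ℝ)
    (hC : ∀ i p, C i p = if p = k i then 1 else if p = j i then -1 else 0)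
    (n : NodalSpace n_n)
    (hl : ∀ i, ‖∑ q, C i q • n q‖ ≠ 0) :
    DifferentiableAt ℝ
      (fun n' : NodalSpace n_n =>
        ((WithLp.equiv 2 (∀ _ : Fin n_e, ℝ)).symm fun i => ‖∑ q, C i q • n' q‖ :
          EuclideanSpace ℝ (Fin n_e))) n ∧
    ∀ (δn : NodalSpace n_n) (i : Fin n_e),
      fderiv ℝ
        (fun n' : NodalSpace n_n =>
          ((WithLp.equiv 2 (∀ _ : Fin n_e, ℝ)).symm fun i => ‖∑ q, C i q • n' q‖ :
            EuclideanSpace ℝ (Fin n_e))) n δn i =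
        (1 / ‖∑ q, C i q • n q‖) * ⟪∑ q, C i q • n q, ∑ q, C i q • δn q⟫ := by
  -- the member vector map as a continuous linear map
  set L : Fin n_e → (NodalSpace n_n →L[ℝ] EuclideanSpace ℝ (Fin 3)) :=
    fun i => ∑ q, C i q • (PiLp.proj 2 (fun _ : Fin n_n => EuclideanSpace ℝ (Fin 3)) q)
    with hL
  have hLapp : ∀ i (x : NodalSpace n_n), L i x = ∑ q, C i q • x q := by
    intro i x
    simp [hL, ContinuousLinearMap.sum_apply]
  -- each component has the stated derivative
  have hcomp : ∀ i, HasFDerivAt (fun n' : NodalSpace n_n => ‖∑ q, C i q • n' q‖)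
      ((1 / ‖L i n‖) • (innerSL ℝ (L i n)).comp (L i)) n := by
    intro i
    have h0 : L i n ≠ 0 := by
      rw [hLapp]; exact norm_ne_zero_iff.mp (hl i)
    have := norm_clm_hasFDerivAt (L i) n h0
    simpa only [hLapp] using this
  -- the full map: composition of the linear equiv with the pi map
  have hF : HasFDerivAt
      (fun n' : NodalSpace n_n =>
        ((WithLp.equiv 2 (∀ _ : Fin n_e, ℝ)).symm fun i => ‖∑ q, C i q • n' q‖ :
          EuclideanSpace ℝ (Fin n_e)))
      (((PiLp.continuousLinearEquiv 2 ℝ (fun _ : Fin n_e => ℝ)).symm :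
          (∀ _ : Fin n_e, ℝ) →L[ℝ] EuclideanSpace ℝ (Fin n_e)).comp
        (ContinuousLinearMap.pi fun i =>
          (1 / ‖L i n‖) • (innerSL ℝ (L i n)).comp (L i))) n := by
    exact ((PiLp.continuousLinearEquiv 2 ℝ (fun _ : Fin n_e => ℝ)).symm :
        (∀ _ : Fin n_e, ℝ) →L[ℝ] EuclideanSpace ℝ (Fin n_e)).hasFDerivAt.comp n
      (hasFDerivAt_pi.mpr hcomp)
  refine ⟨hF.differentiableAt, fun δn i => ?_⟩
  haveI : ContinuousSMul ℝ (NodalSpace n_n) := inferInstance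
  rw [hF.fderiv]
  simp only [ContinuousLinearMap.coe_comp', Function.comp_apply, ContinuousLinearMap.coe_coe,
    PiLp.continuousLinearEquiv_symm_apply, WithLp.equiv_symm_apply,
    ContinuousLinearMap.pi_apply, ContinuousLinearMap.smul_apply, ContinuousLinearMap.comp_apply,
    innerSL_apply_apply, smul_eq_mul, hLapp]
  simp only [ContinuousLinearEquiv.coe_coe, PiLp.continuousLinearEquiv_symm_apply,
    WithLp.equiv_symm_apply, ContinuousLinearMap.pi_apply, ContinuousLinearMap.smul_apply,
    ContinuousLinearMap.comp_apply, innerSL_apply_apply, smul_eq_mul, hLapp]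

end
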